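/- Let d, m, k, p be positive integers with 2k ≤ p ≤ d and 2k ≤ m. Let A ∈ ℝ^{d×m} satisfy Spark(A) > 2k, and let Φ ∈ ℝ^{p×d} be a random matrix with i.i.d. N(0,1/d) entries. Then with probability one, for every subset T of {1,…,m} with |T| = 2k, the matrix Φ·A_T ∈ ℝ^{p×2k} has rank 2k; consequently, with probability one, any two vectors x, x'' ∈ ℝ^m each with at most k nonzero entries satisfying Φ A x = Φ A x'' must be equal. -/

import Mathlib

open MeasureTheory ProbabilityTheory
open scoped NNReal ENNReal

set_option maxHeartbeats 1000000
section stmt11Aux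

open MvPolynomial

lemma measurable_mv_eval {n : ℕ} (q : MvPolynomial (Fin n) ℝ) :
    Measurable fun x : Fin n → ℝ => MvPolynomial.eval x q := by
  induction q using MvPolynomial.induction_on with
  | C a => simpa using measurable_const
  | add p q hp hq => simp only [map_add]; exact hp.add hq
  | mul_X p i hp => simp only [map_mul, eval_X]; exact hp.mul (measurable_pi_apply i)

lemma pi_eval_zero_null (μ : Measure ℝ) [IsProbabilityMeasure μ] (hac : μ ≪ (volume : Measure ℝ)) :
    ∀ (n : ℕ) (q : MvPolynomial (Fin n) ℝ), q ≠ 0 →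
    (Measure.pi fun _ : Fin n => μ) {x | MvPolynomial.eval x q = 0} = 0 := by
  intro n
  induction n with
  | zero =>
    intro q hq
    obtain ⟨r, rfl⟩ := MvPolynomial.C_surjective (Fin 0) q
    have hr : r ≠ 0 := fun h => hq (by simp [h])
    have : {x : Fin 0 → ℝ | MvPolynomial.eval x (MvPolynomial.C r) = 0} = ∅ := by
      ext x; simp [hr]
    rw [this]; simp
  | succ n ih =>
    intro q hq
    set Q := MvPolynomial.finSuccEquiv ℝ n q with hQdef
    have hQ0 : Q ≠ 0 := by
      intro h
      apply hq
      have := (MvPolynomial.finSuccEquiv ℝ n).injective (a₁ := q) (a₂ := 0)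
      exact this (by simpa [hQdef] using h)
    have hc : Q.leadingCoeff ≠ 0 := Polynomial.leadingCoeff_ne_zero.mpr hQ0
    set s' : Set (ℝ × (Fin n → ℝ)) :=
      {y | MvPolynomial.eval (Fin.cons y.1 y.2) q = 0} with hs'def
    have hcons : Measurable fun y : ℝ × (Fin n → ℝ) => (Fin.cons y.1 y.2 : Fin (n+1) → ℝ) := by
      rw [measurable_pi_iff]
      intro i
      refine Fin.cases ?_ ?_ i
      · simpa using measurable_fst
      · intro j; simpa using (measurable_snd.eval : Measurable fun y : ℝ × (Fin n → ℝ) => y.2 j)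
    have hs'm : MeasurableSet s' :=
      ((measurable_mv_eval q).comp hcons) (measurableSet_singleton 0)
    have hpre : (MeasurableEquiv.piFinSuccAbove (fun _ : Fin (n+1) => ℝ) 0) ⁻¹' s'
        = {x | MvPolynomial.eval x q = 0} := by
      ext x
      simp only [Set.mem_preimage, hs'def, Set.mem_setOf_eq,
        MeasurableEquiv.piFinSuccAbove_apply, Fin.insertNthEquiv_zero,
        Fin.consEquiv_symm_apply]
      rw [Fin.cons_self_tail]
    have hmp := measurePreserving_piFinSuccAbove (fun _ : Fin (n+1) => μ) 0
    have key : (Measure.pi fun _ : Fin (n+1) => μ) {x | MvPolynomial.eval x q = 0}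
        = (μ.prod (Measure.pi fun _ : Fin n => μ)) s' := by
      rw [← hpre]
      exact hmp.measure_preimage hs'm.nullMeasurableSet
    rw [key, Measure.prod_apply_symm hs'm]
    have hae : ∀ᵐ y ∂(Measure.pi fun _ : Fin n => μ),
        MvPolynomial.eval y Q.leadingCoeff ≠ 0 := by
      rw [ae_iff]
      simpa using ih Q.leadingCoeff hc
    have : ∀ᵐ y ∂(Measure.pi fun _ : Fin n => μ),
        μ ((fun x => (x, y)) ⁻¹' s') = 0 := by
      filter_upwards [hae] with y hy
      have hPy : Polynomial.map (MvPolynomial.eval y) Q ≠ 0 := by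
        intro h
        apply hy
        have h2 := congrArg (fun P => Polynomial.coeff P Q.natDegree) h
        simp only [Polynomial.coeff_map, Polynomial.coeff_zero] at h2
        rw [← Polynomial.leadingCoeff] at h2
        exact h2
      have hsub : (fun x => (x, y)) ⁻¹' s' ⊆ {a | Polynomial.IsRoot (Polynomial.map (MvPolynomial.eval y) Q) a} := by
        intro a ha
        simp only [Set.mem_preimage, hs'def, Set.mem_setOf_eq] at ha
        rw [MvPolynomial.eval_eq_eval_mv_eval'] at ha
        exact ha
      refine measure_mono_null hsub (hac ?_)
      exact (Polynomial.finite_setOf_isRoot hPy).measure_zero _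
    rw [lintegral_congr_ae this]
    simp

lemma measurable_uncurry_fin (p d : ℕ) :
    Measurable (fun (Φ : Fin p → Fin d → ℝ) (r : Fin (p*d)) =>
      Φ (finProdFinEquiv.symm r).1 (finProdFinEquiv.symm r).2) := by
  rw [measurable_pi_iff]
  intro r
  exact (measurable_pi_apply _).comp (measurable_pi_apply _)

lemma map_uncurry_pi (p d : ℕ) (μ : Measure ℝ) [IsProbabilityMeasure μ] :
    Measure.map (fun (Φ : Fin p → Fin d → ℝ) (r : Fin (p*d)) =>
        Φ (finProdFinEquiv.symm r).1 (finProdFinEquiv.symm r).2)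
      (Measure.pi fun _ : Fin p => Measure.pi fun _ : Fin d => μ)
      = Measure.pi fun _ : Fin (p*d) => μ := by
  refine (Measure.pi_eq (μ := fun _ : Fin (p*d) => μ) fun s hs => ?_).symm
  rw [Measure.map_apply (measurable_uncurry_fin p d) (MeasurableSet.univ_pi hs)]
  have hpre : (fun (Φ : Fin p → Fin d → ℝ) (r : Fin (p*d)) =>
        Φ (finProdFinEquiv.symm r).1 (finProdFinEquiv.symm r).2) ⁻¹' (Set.univ.pi s)
      = Set.univ.pi (fun i : Fin p => Set.univ.pi fun j : Fin d => s (finProdFinEquiv (i, j))) := by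
    ext Φ
    simp only [Set.mem_preimage, Set.mem_pi, Set.mem_univ, forall_true_left]
    constructor
    · intro h i j
      simpa using h (finProdFinEquiv (i, j))
    · intro h r
      have := h (finProdFinEquiv.symm r).1 (finProdFinEquiv.symm r).2
      rwa [Prod.mk.eta, Equiv.apply_symm_apply] at this
  rw [hpre, Measure.pi_pi]
  simp_rw [Measure.pi_pi]
  rw [← Fintype.prod_prod_type (f := fun x : Fin p × Fin d => μ (s (finProdFinEquiv x))),
    Equiv.prod_comp finProdFinEquiv (fun r => μ (s r))]

noncomputable def auxN {d m k p : ℕ} (hkp : 2*k ≤ p) (A : Matrix (Fin d) (Fin m) ℝ)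
    (t : Fin (2*k) → Fin m) (Φ : Fin p → Fin d → ℝ) : Matrix (Fin (2*k)) (Fin (2*k)) ℝ :=
  Matrix.of fun l l' => ∑ j : Fin d, A j (t l') * Φ (Fin.castLE hkp l) j

lemma exists_det_ne {d m k p : ℕ} (hkp : 2*k ≤ p) (A : Matrix (Fin d) (Fin m) ℝ)
    (t : Fin (2*k) → Fin m)
    (hli : LinearIndependent ℝ (fun l : Fin (2*k) => fun i : Fin d => A i (t l))) :
    ∃ Φ : Fin p → Fin d → ℝ, (auxN hkp A t Φ).det ≠ 0 := by
  classical
  set M0 : Matrix (Fin d) (Fin (2*k)) ℝ := A.submatrix id t with hM0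
  have hinj : Function.Injective (Matrix.toLin' M0) := by
    have h1 : Function.Injective M0.mulVec := by
      rw [Matrix.mulVec_injective_iff]
      exact hli
    intro a b hab
    apply h1
    rw [← Matrix.toLin'_apply, ← Matrix.toLin'_apply, hab]
  obtain ⟨g, hg⟩ := (Matrix.toLin' M0).exists_leftInverse_of_injective
    (LinearMap.ker_eq_bot.mpr hinj)
  set B := LinearMap.toMatrix' g with hB
  have hBM : B * M0 = 1 := by
    have h1 := congrArg LinearMap.toMatrix' hg
    rwa [LinearMap.toMatrix'_comp, LinearMap.toMatrix'_toLin', LinearMap.toMatrix'_id, ← hB] at h1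
  refine ⟨fun i j => if h : (i : ℕ) < 2*k then B ⟨i, h⟩ j else 0, ?_⟩
  have hN : auxN hkp A t (fun i j => if h : (i : ℕ) < 2*k then B ⟨i, h⟩ j else 0) = B * M0 := by
    ext l l'
    simp only [auxN, Matrix.of_apply, Matrix.mul_apply, hM0, Matrix.submatrix_apply, id_eq]
    refine Finset.sum_congr rfl fun j _ => ?_
    rw [dif_pos (by simpa using l.isLt)]
    rw [mul_comm]
    congr 1
  rw [hN, hBM]
  simp





lemma det_zero_null {d m k p : ℕ} (hd : 0 < d) (hkp : 2*k ≤ p) (A : Matrix (Fin d) (Fin m) ℝ)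
    (t : Fin (2*k) → Fin m)
    (hne : ∃ Φ : Fin p → Fin d → ℝ, (auxN hkp A t Φ).det ≠ 0) :
    (Measure.pi fun _ : Fin p => Measure.pi fun _ : Fin d => gaussianReal 0 (d : ℝ≥0)⁻¹)
      {Φ | (auxN hkp A t Φ).det = 0} = 0 := by
  classical
  set μ := gaussianReal 0 (d : ℝ≥0)⁻¹ with hμ
  set q : MvPolynomial (Fin (p*d)) ℝ :=
    Matrix.det (Matrix.of fun l l' : Fin (2*k) =>
      ∑ j : Fin d, MvPolynomial.C (A j (t l')) *
        MvPolynomial.X (finProdFinEquiv (Fin.castLE hkp l, j))) with hqdef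
  have hEval : ∀ Φ : Fin p → Fin d → ℝ,
      MvPolynomial.eval (fun r => Φ (finProdFinEquiv.symm r).1 (finProdFinEquiv.symm r).2) q
        = (auxN hkp A t Φ).det := by
    intro Φ
    rw [hqdef, RingHom.map_det]
    congr 1
    ext l l'
    simp only [RingHom.mapMatrix_apply, Matrix.map_apply, Matrix.of_apply, auxN]
    rw [map_sum]
    simp only [map_mul, MvPolynomial.eval_C, MvPolynomial.eval_X]
    refine Finset.sum_congr rfl fun j _ => ?_
    rw [Equiv.symm_apply_apply]
  have hq0 : q ≠ 0 := by
    obtain ⟨Φ, hΦ⟩ := hne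
    intro h
    rw [← hEval Φ, h] at hΦ
    simp at hΦ
  have hset : {Φ : Fin p → Fin d → ℝ | (auxN hkp A t Φ).det = 0}
      = (fun (Φ : Fin p → Fin d → ℝ) (r : Fin (p*d)) =>
          Φ (finProdFinEquiv.symm r).1 (finProdFinEquiv.symm r).2) ⁻¹'
        {x | MvPolynomial.eval x q = 0} := by
    ext Φ
    simp only [Set.mem_setOf_eq, Set.mem_preimage, hEval]
  have hZ : MeasurableSet {x : Fin (p*d) → ℝ | MvPolynomial.eval x q = 0} :=
    (measurable_mv_eval q) (measurableSet_singleton 0)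
  rw [hset, ← Measure.map_apply (measurable_uncurry_fin p d) hZ, map_uncurry_pi]
  exact pi_eval_zero_null μ
    (gaussianReal_absolutelyContinuous _ (inv_ne_zero (by exact_mod_cast hd.ne'))) (p*d) q hq0


lemma measurable_auxN_det {d m k p : ℕ} (hkp : 2*k ≤ p) (A : Matrix (Fin d) (Fin m) ℝ)
    (t : Fin (2*k) → Fin m) :
    Measurable fun Φ : Fin p → Fin d → ℝ => (auxN hkp A t Φ).det := by
  have hent : ∀ l l' : Fin (2*k),
      Measurable fun Φ : Fin p → Fin d → ℝ => (auxN hkp A t Φ) l l' := by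
    intro l l'
    simp only [auxN, Matrix.of_apply]
    exact Finset.measurable_sum _ fun j _ =>
      measurable_const.mul ((measurable_pi_apply j).comp (measurable_pi_apply _))
  simp_rw [Matrix.det_apply']
  exact Finset.measurable_sum _ fun σ _ =>
    measurable_const.mul (Finset.measurable_prod _ fun i _ => hent _ _)


end stmt11Aux

open Classical in
/-- proof of Lemma 1, appendix: if `Spark(A) > 2k`, then with
probability one over a random `Φ ∈ ℝ^{p×d}` with i.i.d. `N(0,1/d)` entries, every
column submatrix `Φ·A_T` with `|T| = 2k` has full rank `2k`; consequently, any two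
at-most-`k`-sparse vectors `x, x''` with `Φ A x = Φ A x''` coincide. -/
theorem stmt11 (d m k p : ℕ) (hd : 0 < d) (hm : 0 < m) (hk : 0 < k) (hp : 0 < p)
    (hkp : 2 * k ≤ p) (hpd : p ≤ d) (hkm : 2 * k ≤ m)
    (A : Matrix (Fin d) (Fin m) ℝ)
    (hA : ∀ T : Finset (Fin m), T.card ≤ 2 * k →
      LinearIndependent ℝ (fun j : T => fun i => A i (j : Fin m))) :
    (Measure.pi fun _ : Fin p => Measure.pi fun _ : Fin d => gaussianReal 0 (d : ℝ≥0)⁻¹)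
      {Φ : Fin p → Fin d → ℝ |
        (∀ T : Finset (Fin m), T.card = 2 * k →
          ((Matrix.of Φ * A).submatrix id (fun j : T => (j : Fin m))).rank = 2 * k) ∧
        ∀ x x'' : Fin m → ℝ,
          (Finset.univ.filter fun i => x i ≠ 0).card ≤ k →
          (Finset.univ.filter fun i => x'' i ≠ 0).card ≤ k →
          (Matrix.of Φ).mulVec (A.mulVec x) = (Matrix.of Φ).mulVec (A.mulVec x'') →
          x = x''} = 1 := by
  classical
  set ν := (Measure.pi fun _ : Fin p => Measure.pi fun _ : Fin d => gaussianReal 0 (d : ℝ≥0)⁻¹)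
    with hν
  haveI : IsProbabilityMeasure ν := by rw [hν]; infer_instance
  set G : Set (Fin p → Fin d → ℝ) :=
    ⋂ (T : Finset (Fin m)) (hT : T.card = 2*k),
      {Φ | (auxN hkp A (fun l => ((T.equivFinOfCardEq hT).symm l : Fin m)) Φ).det ≠ 0} with hG
  have hGmeas : MeasurableSet G := by
    rw [hG]
    refine MeasurableSet.iInter fun T => MeasurableSet.iInter fun hT => ?_
    have h1 : MeasurableSet {Φ : Fin p → Fin d → ℝ |
        (auxN hkp A (fun l => ((T.equivFinOfCardEq hT).symm l : Fin m)) Φ).det = 0} :=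
      measurable_auxN_det hkp A _ (measurableSet_singleton 0)
    have h2 : {Φ : Fin p → Fin d → ℝ |
        (auxN hkp A (fun l => ((T.equivFinOfCardEq hT).symm l : Fin m)) Φ).det ≠ 0}
        = {Φ : Fin p → Fin d → ℝ |
        (auxN hkp A (fun l => ((T.equivFinOfCardEq hT).symm l : Fin m)) Φ).det = 0}ᶜ := by
      ext Φ; simp
    rw [h2]
    exact h1.compl
  have hGc : ν Gᶜ = 0 := by
    rw [hG]
    simp only [Set.compl_iInter]
    refine measure_iUnion_null fun T => measure_iUnion_null fun hT => ?_
    have h2 : {Φ : Fin p → Fin d → ℝ |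
        (auxN hkp A (fun l => ((T.equivFinOfCardEq hT).symm l : Fin m)) Φ).det ≠ 0}ᶜ
        = {Φ : Fin p → Fin d → ℝ |
        (auxN hkp A (fun l => ((T.equivFinOfCardEq hT).symm l : Fin m)) Φ).det = 0} := by
      ext Φ; simp
    rw [h2, hν]
    refine det_zero_null hd hkp A _ (exists_det_ne hkp A _ ?_)
    exact (hA T (le_of_eq hT)).comp (T.equivFinOfCardEq hT).symm (Equiv.injective _)
  have hG1 : ν G = 1 := (prob_compl_eq_zero_iff hGmeas).mp hGc
  have hsub : G ⊆ {Φ : Fin p → Fin d → ℝ |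
        (∀ T : Finset (Fin m), T.card = 2 * k →
          ((Matrix.of Φ * A).submatrix id (fun j : T => (j : Fin m))).rank = 2 * k) ∧
        ∀ x x'' : Fin m → ℝ,
          (Finset.univ.filter fun i => x i ≠ 0).card ≤ k →
          (Finset.univ.filter fun i => x'' i ≠ 0).card ≤ k →
          (Matrix.of Φ).mulVec (A.mulVec x) = (Matrix.of Φ).mulVec (A.mulVec x'') →
          x = x''} := by
    intro Φ hΦ
    rw [hG] at hΦ
    simp only [Set.mem_iInter, Set.mem_setOf_eq] at hΦ
    have key : ∀ (T : Finset (Fin m)) (hT : T.card = 2*k) (v : Fin m → ℝ),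
        (∀ j ∉ T, v j = 0) →
        (Matrix.of Φ).mulVec (A.mulVec v) = 0 → v = 0 := by
      intro T hT v hvT hAv
      set σ := T.equivFinOfCardEq hT with hσ
      set t : Fin (2*k) → Fin m := fun l => ((σ.symm l : Fin m)) with ht
      have hdet := hΦ T hT
      set N := auxN hkp A t Φ with hN
      set w : Fin (2*k) → ℝ := fun l => v (t l) with hw
      have hNw : N.mulVec w = 0 := by
        funext l
        show ∑ l', N l l' * w l' = 0
        set g : Fin m → ℝ := fun j => (Matrix.of Φ * A) (Fin.castLE hkp l) j with hg
        have hNg : ∀ l', N l l' = g (t l') := by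
          intro l'
          simp only [hN, auxN, Matrix.of_apply, hg, Matrix.mul_apply]
          exact Finset.sum_congr rfl fun j _ => mul_comm _ _
        have e0 : ∑ l', N l l' * w l' = ∑ l', g (t l') * v (t l') := by
          refine Finset.sum_congr rfl fun l' _ => ?_
          rw [hNg l']
        have e1 : ∑ l', g (t l') * v (t l') = ∑ j : T, g (j : Fin m) * v (j : Fin m) :=
          Equiv.sum_comp σ.symm (fun j : T => g (j : Fin m) * v (j : Fin m))
        have e2 : ∑ j : T, g (j : Fin m) * v (j : Fin m) = ∑ j ∈ T, g j * v j :=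
          Finset.sum_coe_sort T (fun j => g j * v j)
        have e3 : ∑ j ∈ T, g j * v j = ∑ j, g j * v j :=
          Finset.sum_subset (Finset.subset_univ T)
            (fun j _ hj => by rw [hvT j hj, mul_zero])
        rw [e0, e1, e2, e3]
        have e4 : ∑ j, g j * v j = ((Matrix.of Φ * A).mulVec v) (Fin.castLE hkp l) := rfl
        rw [e4, ← Matrix.mulVec_mulVec, hAv]
        rfl
      have hunit : IsUnit N.det := isUnit_iff_ne_zero.2 hdet
      have hw0 : w = 0 := by
        have h2 : N⁻¹.mulVec (N.mulVec w) = w := by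
          rw [Matrix.mulVec_mulVec, Matrix.nonsing_inv_mul N hunit, Matrix.one_mulVec]
        rw [← h2, hNw, Matrix.mulVec_zero]
      funext j
      show v j = (0:ℝ)
      by_cases hj : j ∈ T
      · have h3 : v (t (σ ⟨j, hj⟩)) = 0 := congrFun hw0 (σ ⟨j, hj⟩)
        have h4 : t (σ ⟨j, hj⟩) = j := by
          rw [ht]
          simp
        rw [← h4]
        exact h3
      · exact hvT j hj
    constructor
    · intro T hT
      set σ := T.equivFinOfCardEq hT with hσ
      set t : Fin (2*k) → Fin m := fun l => ((σ.symm l : Fin m)) with ht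
      have hdet := hΦ T hT
      set Mg := (Matrix.of Φ * A).submatrix id (fun j : T => (j : Fin m)) with hMg
      set E : Matrix (Fin (2*k)) (Fin p) ℝ :=
        Matrix.of fun l i => if i = Fin.castLE hkp l then (1:ℝ) else 0 with hE
      set F : Matrix T (Fin (2*k)) ℝ :=
        Matrix.of fun j l' => if j = σ.symm l' then (1:ℝ) else 0 with hF
      have hfact : auxN hkp A t Φ = E * (Mg * F) := by
        ext l l'
        have h1 : (E * (Mg * F)) l l' = (Mg * F) (Fin.castLE hkp l) l' := by
          simp [hE, Matrix.mul_apply, ite_mul]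
        have h2 : (Mg * F) (Fin.castLE hkp l) l' = Mg (Fin.castLE hkp l) (σ.symm l') := by
          simp [hF, Matrix.mul_apply, mul_ite]
        rw [h1, h2]
        simp only [hMg, Matrix.submatrix_apply, id_eq, Matrix.mul_apply, auxN, Matrix.of_apply]
        exact Finset.sum_congr rfl fun j _ => mul_comm _ _
      have hunit : IsUnit (auxN hkp A t Φ) :=
        (Matrix.isUnit_iff_isUnit_det _).2 (isUnit_iff_ne_zero.2 hdet)
      have hrankN : (auxN hkp A t Φ).rank = 2*k := by
        rw [Matrix.rank_of_isUnit _ hunit, Fintype.card_fin]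
      have hle1 : (auxN hkp A t Φ).rank ≤ Mg.rank := by
        rw [hfact]
        exact le_trans (Matrix.rank_mul_le_right E (Mg * F)) (Matrix.rank_mul_le_left Mg F)
      have hle2 : Mg.rank ≤ 2*k := by
        have h5 := Matrix.rank_le_card_width Mg
        rwa [Fintype.card_coe, hT] at h5
      exact le_antisymm hle2 (hrankN ▸ hle1)
    · intro x x'' hx hx'' heq
      set v : Fin m → ℝ := x - x'' with hv
      set S0 := ((Finset.univ.filter fun i => x i ≠ 0) ∪
        (Finset.univ.filter fun i => x'' i ≠ 0)) with hS0
      have hcard : S0.card ≤ 2*k :=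
        le_trans (Finset.card_union_le _ _) (by omega)
      obtain ⟨T, hsubT, -, hT⟩ := Finset.exists_subsuperset_card_eq
        (Finset.subset_univ S0) hcard (by simpa using hkm)
      have hvT : ∀ j ∉ T, v j = 0 := by
        intro j hj
        have hjS : j ∉ S0 := fun h => hj (hsubT h)
        rw [hS0] at hjS
        simp only [Finset.mem_union, Finset.mem_filter, Finset.mem_univ, true_and,
          not_or, not_not] at hjS
        simp [hv, hjS.1, hjS.2]
      have hAv : (Matrix.of Φ).mulVec (A.mulVec v) = 0 := by
        rw [hv, Matrix.mulVec_sub, Matrix.mulVec_sub, heq, sub_self]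
      have := key T hT v hvT hAv
      funext j
      have h6 : v j = 0 := congrFun this j
      have h7 : x j - x'' j = 0 := h6
      linarith
  refine le_antisymm prob_le_one ?_
  calc (1:ℝ≥0∞) = ν G := hG1.symm
    _ ≤ _ := measure_mono hsub
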